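/- arXiv:2010.15271 — 2 statements merged into one kernel-verified Lean document; each statement's English description precedes it below -/
import Mathlib

section
/- If $u_c \in \mathring{H}^1_m$ is a critical point of the Ohta-Kawasaki energy ($DF(u_c) \equiv 0$ on $\mathring{H}^1$) and $\Omega$ has a $C^{r,1}$ boundary with $r \geq 1$ and satisfies the cone condition, then $u_c \in H^{r+1}(\Omega)$. -/
/-!
STATEMENT 2 (Proposition `regularity`): If `u_c ∈ H̊¹_m` is a critical point of the
Ohta–Kawasaki energy (`DF(u_c) ≡ 0` on `H̊¹`) and `Ω` has a `C^{r,1}` boundary with `r ≥ 1`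
satisfying the cone condition, then `u_c ∈ H^{r+1}(Ω)`.

Abstract formalization following the bootstrap proof: `V` is the ambient space of functions
(a commutative ℝ-algebra, so that the cube `u³` makes sense pointwise), `H k` is the Sobolev
space `H^k(Ω)` (`H 0 = L²`), decreasing in `k`, containing the constants. `G` is the Green
operator `(-Δ_N)⁻¹ R` of the pure Neumann Poisson problem; by Neumann elliptic regularity on a
`C^{r,1}` domain it maps `H^k → H^{k+2}` for `k + 2 ≤ r + 1`. Cube-stability of the Sobolev
scale: `u ∈ H¹ ⇒ u³ ∈ L²` (Sobolev embedding `H¹ ↪ L⁶`, `d ≤ 3`) and `u ∈ H^k ⇒ u³ ∈ H^k`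
for `k ≥ 2` (`H^k` is an algebra for `k > d/2` on cone-condition domains).
The first-order condition `DF(u_c) ≡ 0` is recast as the elliptic equation
`ε² u_c = G(s·1 - κ(u_c³ - u_c) - σ w) + m·1` with `w = G(u_c - m·1)` and a constant `s`.
Conclusion: `u_c ∈ H^{r+1}`.
-/
theorem stmt2 {V : Type*} [CommRing V] [Algebra ℝ V]
    (H : ℕ → Submodule ℝ V)
    (hmono : ∀ k, H (k + 1) ≤ H k)
    (hconst : ∀ k, (1 : V) ∈ H k)
    (r : ℕ) (hr : 1 ≤ r)
    (G : V → V)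
    (hG : ∀ k, k + 2 ≤ r + 1 → ∀ f ∈ H k, G f ∈ H (k + 2))
    (hcube0 : ∀ v ∈ H 1, v ^ 3 ∈ H 0)
    (hcube : ∀ k, 2 ≤ k → ∀ v ∈ H k, v ^ 3 ∈ H k)
    (κ ε σ m s : ℝ) (hκ : 0 < κ) (hε : 0 < ε) (hσ : 0 < σ)
    (hm : -1 < m ∧ m < 1)
    (u w : V)
    (hu : u ∈ H 1)
    (hw : w = G (u - algebraMap ℝ V m))
    (heq : ε ^ 2 • u =
      G (algebraMap ℝ V s - κ • (u ^ 3 - u) - σ • w) + algebraMap ℝ V m) :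
    u ∈ H (r + 1) := by

  have hle : ∀ a b : ℕ, b ≤ a → H a ≤ H b := by
    intro a
    induction a with
    | zero => intro b hb; simp [Nat.le_zero.mp hb]
    | succ n ih =>
      intro b hb
      rcases Nat.lt_or_ge b (n + 1) with h' | h'
      · exact (hmono n).trans (ih b (Nat.lt_succ_iff.mp h'))
      · have : b = n + 1 := le_antisymm hb h'
        subst this; exact le_rfl
  -- one bootstrap step
  have step : ∀ n, 1 ≤ n → n + 1 ≤ r + 1 → u ∈ H n → u ∈ H (n + 1) := by
    intro n hn1 hnr hun
    obtain ⟨p, rfl⟩ : ∃ p, n = p + 1 := ⟨n - 1, by omega⟩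
    -- u³ ∈ H p
    have hcu : u ^ 3 ∈ H p := by
      rcases Nat.eq_or_lt_of_le hn1 with h1 | h1
      · have : p = 0 := by omega
        subst this
        exact hcube0 u hun
      · exact hmono p (hcube (p + 1) (by omega) u hun)
    -- w ∈ H p
    have hwm : w ∈ H p := by
      have harg : u - algebraMap ℝ V m ∈ H p := by
        have h1' : algebraMap ℝ V m ∈ H p := by
          rw [Algebra.algebraMap_eq_smul_one]
          exact (H p).smul_mem m (hconst p)
        exact (H p).sub_mem (hmono p hun) h1'
      have := hG p (by omega) _ harg
      rw [← hw] at this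
      exact hle (p + 2) p (by omega) this
    have hf : algebraMap ℝ V s - κ • (u ^ 3 - u) - σ • w ∈ H p := by
      have hs' : algebraMap ℝ V s ∈ H p := by
        rw [Algebra.algebraMap_eq_smul_one]
        exact (H p).smul_mem s (hconst p)
      exact (H p).sub_mem (((H p).sub_mem hs'
        ((H p).smul_mem κ ((H p).sub_mem hcu (hmono p hun)))))
        ((H p).smul_mem σ hwm)
    have hGf := hG p (by omega) _ hf
    have hsum : ε ^ 2 • u ∈ H (p + 2) := by
      rw [heq]
      refine (H (p + 2)).add_mem hGf ?_
      rw [Algebra.algebraMap_eq_smul_one]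
      exact (H (p + 2)).smul_mem m (hconst _)
    have hne : ε ^ 2 ≠ 0 := by positivity
    have : (ε ^ 2)⁻¹ • (ε ^ 2 • u) ∈ H (p + 2) := (H (p + 2)).smul_mem _ hsum
    rwa [inv_smul_smul₀ hne] at this
  have key : ∀ j, 1 ≤ j → j ≤ r + 1 → u ∈ H j := by
    intro j
    induction j with
    | zero => omega
    | succ n ih =>
      intro _ hj
      rcases Nat.eq_zero_or_pos n with h0 | h0
      · subst h0; exact hu
      · exact step n h0 hj (ih h0 (by omega))
  exact key (r + 1) (by omega) le_rfl
end

section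
/- There exists a constant $\gamma_c = \epsilon^2/(c_p^2 \kappa) > 0$, where $c_p$ is the Poincaré-Wirtinger constant of $\Omega$, such that for all $\gamma \in [0, \gamma_c)$ the modified Hessian $H_\gamma(u)$ is coercive on $\mathring{H}^1$ at every $u \in \mathring{H}^1_m$: $\langle H_\gamma(u)\tilde u_0, \tilde u_0\rangle \geq (\epsilon^2 - c_p^2 \kappa \gamma)\|\nabla\tilde u_0\|_{L^2}^2$ for all $\tilde u_0 \in \mathring{H}^1$. -/
open MeasureTheory

/-!
STATEMENT 10 (Proposition `coercivity`): with `γ_c := ε²/(c_p² κ) > 0` (where `c_p` is the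
Poincaré–Wirtinger constant of `Ω`), for every `γ ∈ [0, γ_c)` the modified Hessian `H_γ(u)`
is coercive on `H̊¹` at every `u ∈ H̊¹_m`:
`⟨H_γ(u) ṽ₀, ṽ₀⟩ ≥ (ε² - c_p² κ γ)‖∇ṽ₀‖²_{L²}` for all `ṽ₀ ∈ H̊¹`, the constant
`ε² - c_p² κ γ` being positive.

Formalization as in Statement 9: the modified double-well term is the integral
`∫ κ (2u² + γ(u² - 1)) v² dμ`, `‖grad v‖²` is `‖∇v‖²_{L²}`, `σ‖Rm v‖²` is the nonlocal term.
`hpoin` is the Poincaré–Wirtinger inequality on `H̊¹`; `hint`, `hint2` record integrability of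
the integrands (so the integral splits).
-/
theorem stmt10 {Ω : Type*} [MeasurableSpace Ω] (μ : Measure Ω)
    {W X : Type*} [NormedAddCommGroup W] [InnerProductSpace ℝ W]
    [NormedAddCommGroup X] [InnerProductSpace ℝ X]
    (grad : (Ω → ℝ) →ₗ[ℝ] W) (Rm : (Ω → ℝ) →ₗ[ℝ] X)
    (κ ε σ : ℝ) (hκ : 0 < κ) (hε : 0 < ε) (hσ : 0 < σ)
    (cp : ℝ) (hcp : 0 < cp)
    (H1m H1z : Set (Ω → ℝ))
    (hpoin : ∀ w ∈ H1z, (∫ x, (w x) ^ 2 ∂μ) ≤ cp ^ 2 * ‖grad w‖ ^ 2)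
    (γ : ℝ) (hγ0 : 0 ≤ γ) (hγc : γ < ε ^ 2 / (cp ^ 2 * κ))
    (u v : Ω → ℝ) (hu : u ∈ H1m) (hv : v ∈ H1z)
    (hint : Integrable (fun x => (u x) ^ 2 * (v x) ^ 2) μ)
    (hint2 : Integrable (fun x => (v x) ^ 2) μ) :
    0 < ε ^ 2 - cp ^ 2 * κ * γ ∧
    (ε ^ 2 - cp ^ 2 * κ * γ) * ‖grad v‖ ^ 2 ≤
      (∫ x, κ * (2 * (u x) ^ 2 + γ * ((u x) ^ 2 - 1)) * (v x) ^ 2 ∂μ)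
        + ε ^ 2 * ‖grad v‖ ^ 2 + σ * ‖Rm v‖ ^ 2 := by
  have hpos : 0 < ε ^ 2 - cp ^ 2 * κ * γ := by
    have h := (lt_div_iff₀ (by positivity : (0:ℝ) < cp ^ 2 * κ)).mp hγc
    nlinarith
  refine ⟨hpos, ?_⟩
  -- pointwise lower bound
  have hintI : Integrable (fun x => κ * (2 * (u x) ^ 2 + γ * ((u x) ^ 2 - 1)) * (v x) ^ 2) μ := by
    have : (fun x => κ * (2 * (u x) ^ 2 + γ * ((u x) ^ 2 - 1)) * (v x) ^ 2)
        = fun x => (κ * (2 + γ)) * ((u x) ^ 2 * (v x) ^ 2) + (-(κ * γ)) * (v x) ^ 2 := by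
      funext x; ring
    rw [this]
    exact (hint.const_mul _).add (hint2.const_mul _)
  have hlb : (∫ x, (-(κ * γ)) * (v x) ^ 2 ∂μ) ≤
      ∫ x, κ * (2 * (u x) ^ 2 + γ * ((u x) ^ 2 - 1)) * (v x) ^ 2 ∂μ := by
    refine integral_mono (hint2.const_mul _) hintI (fun x => ?_)
    have h1 : 0 ≤ (u x) ^ 2 * (v x) ^ 2 := by positivity
    nlinarith [mul_nonneg (mul_nonneg hκ.le (by linarith : (0:ℝ) ≤ 2 + γ)) h1]
  have hI : (∫ x, (-(κ * γ)) * (v x) ^ 2 ∂μ) = -(κ * γ) * ∫ x, (v x) ^ 2 ∂μ :=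
    integral_const_mul _ _
  have hp := hpoin v hv
  have hRm : 0 ≤ σ * ‖Rm v‖ ^ 2 := by positivity
  have hκγ : 0 ≤ κ * γ := mul_nonneg hκ.le hγ0
  nlinarith [mul_le_mul_of_nonneg_left hp hκγ]
end
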